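/- (Transductive contextual stability) Suppose Γ is (κ,δ)-admissible, let ε ≥ 0, let D be a (ρ, (1+2ε)/δ)-dispersed probability distribution on ℝ, let α = (α_{σ,j})_{σ∈P, 1≤j≤N} have independent coordinates each with law D, and suppose that for every α the sequence π_1(α),…,π_{T+1}(α) is an ε-approximate contextual FTPL trajectory for α, with each map α ↦ π_t(α) measurable. Then E[ Σ_{t=1}^T ( f(π_{t+1}(α)(σ_t), y_t) − f(π_t(α)(σ_t), y_t) ) ] ≤ 2TNκρ. -/

import Mathlib

open Finset MeasureTheory
open scoped ENNReal

/-- A set of diameter at most `L` has `D`-measure at most `ofReal ρ` when every closed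
interval of length `L` has measure at most `ofReal ρ`. -/
lemma measure_le_of_small_diam (D : Measure ℝ) (ρ L : ℝ)
    (hdisp : ∀ a : ℝ, D (Set.Icc a (a + L)) ≤ ENNReal.ofReal ρ)
    (A : Set ℝ) (hA : ∀ z ∈ A, ∀ z' ∈ A, z' - z ≤ L) :
    D A ≤ ENNReal.ofReal ρ := by
  rcases A.eq_empty_or_nonempty with h | ⟨z₀, hz₀⟩
  · simp [h]
  · have hbdd : BddBelow A := ⟨z₀ - L, fun z hz => by have := hA z hz z₀ hz₀; linarith⟩
    have hsub : A ⊆ Set.Icc (sInf A) (sInf A + L) := by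
      intro z hz
      refine ⟨csInf_le hbdd hz, ?_⟩
      have h2 : z - L ≤ sInf A :=
        le_csInf ⟨z₀, hz₀⟩ (fun z' hz' => by have := hA z' hz' z hz; linarith)
      linarith
    exact (measure_mono hsub).trans (hdisp _)

/-- The core one-dimensional ("slice") bound for approximate FTPL stability: if `Pf z` is an
`ε`-approximate maximizer of `π ↦ K π + z * g π` over `Pol` and `Qf z` is an `ε`-approximate
maximizer of `π ↦ (K π + fQ π) + z * g π` over `Pol` with `fQ` taking values in `[0,1]`, the
values `g π` lying in a set `V` of at most `κ` reals that are pairwise `δ`-separated, then the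
set of `z` where `g (Pf z) ≠ g (Qf z)` has measure at most `2κρ` under any distribution `D`
in which every interval of length `(1+2ε)/δ` has mass at most `ρ`. -/
lemma ftpl_slice_bound {Λ : Type*} (Pol : Finset Λ)
    (g K fQ : Λ → ℝ) (V : Finset ℝ)
    (hgV : ∀ π ∈ Pol, g π ∈ V)
    (hfQ0 : ∀ π ∈ Pol, 0 ≤ fQ π) (hfQ1 : ∀ π ∈ Pol, fQ π ≤ 1)
    (κ : ℕ) (hκ : V.card ≤ κ)
    (δ : ℝ) (hδ : 0 < δ)
    (hgap : ∀ a ∈ V, ∀ b ∈ V, a ≠ b → δ ≤ |a - b|)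
    (ε ρ : ℝ) (hε : 0 ≤ ε) (hρ : 0 ≤ ρ)
    (D : Measure ℝ)
    (hdisp : ∀ a : ℝ, D (Set.Icc a (a + (1 + 2*ε)/δ)) ≤ ENNReal.ofReal ρ)
    (Pf Qf : ℝ → Λ) (hPf : ∀ z, Pf z ∈ Pol) (hQf : ∀ z, Qf z ∈ Pol)
    (hopt1 : ∀ z : ℝ, ∀ π ∈ Pol, K π + z * g π - ε ≤ K (Pf z) + z * g (Pf z))
    (hopt2 : ∀ z : ℝ, ∀ π ∈ Pol,
      (K π + fQ π) + z * g π - ε ≤ (K (Qf z) + fQ (Qf z)) + z * g (Qf z)) :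
    D {z : ℝ | g (Pf z) ≠ g (Qf z)} ≤ ENNReal.ofReal (2 * κ * ρ) := by
  classical
  set L : ℝ := (1 + 2*ε)/δ with hL
  have hLpos : 0 < L := by rw [hL]; positivity
  -- group maxima
  set b : ℝ → ℝ := fun u =>
    if h : (Pol.filter (fun π => g π = u)).Nonempty then
      (Pol.filter (fun π => g π = u)).sup' h K
    else 0 with hbdef
  have hb_le : ∀ π ∈ Pol, K π ≤ b (g π) := by
    intro π hπ
    have hne : (Pol.filter (fun π' => g π' = g π)).Nonempty :=
      ⟨π, Finset.mem_filter.mpr ⟨hπ, rfl⟩⟩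
    rw [hbdef]
    simp only
    rw [dif_pos hne]
    have hmemf : π ∈ Pol.filter (fun π' => g π' = g π) := Finset.mem_filter.mpr ⟨hπ, rfl⟩
    exact Finset.le_sup' K hmemf
  have hb_ex : ∀ π ∈ Pol, ∃ π', π' ∈ Pol ∧ g π' = g π ∧ b (g π) = K π' := by
    intro π hπ
    have hne : (Pol.filter (fun π' => g π' = g π)).Nonempty :=
      ⟨π, Finset.mem_filter.mpr ⟨hπ, rfl⟩⟩
    obtain ⟨π', hπ', heq⟩ := Finset.exists_mem_eq_sup' hne K
    refine ⟨π', (Finset.mem_filter.mp hπ').1, (Finset.mem_filter.mp hπ').2, ?_⟩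
    rw [hbdef]
    simp only
    rw [dif_pos hne]
    exact heq
  have est1 : ∀ z : ℝ, ∀ π ∈ Pol, b (g π) + z * g π - ε ≤ b (g (Pf z)) + z * g (Pf z) := by
    intro z π hπ
    obtain ⟨π', hπ', hg', hb'⟩ := hb_ex π hπ
    have h1 := hopt1 z π' hπ'
    have h2 := hb_le (Pf z) (hPf z)
    rw [hg'] at h1
    rw [hb']
    linarith
  have est2 : ∀ z : ℝ, ∀ π ∈ Pol,
      b (g π) + z * g π - (1 + ε) ≤ b (g (Qf z)) + z * g (Qf z) := by
    intro z π hπ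
    obtain ⟨π', hπ', hg', hb'⟩ := hb_ex π hπ
    have h1 := hopt2 z π' hπ'
    have h2 := hb_le (Qf z) (hQf z)
    have h3 := hfQ0 π' hπ'
    have h4 := hfQ1 (Qf z) (hQf z)
    rw [hg'] at h1
    rw [hb']
    linarith
  have gapPQ : ∀ z : ℝ, g (Pf z) ≠ g (Qf z) → δ ≤ |g (Pf z) - g (Qf z)| := fun z hne =>
    hgap _ (hgV _ (hPf z)) _ (hgV _ (hQf z)) hne
  set Ag : ℝ → Set ℝ := fun u => {z | g (Pf z) = u ∧ u < g (Qf z)} with hAg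
  set Al : ℝ → Set ℝ := fun u => {z | g (Pf z) = u ∧ g (Qf z) < u} with hAl
  -- the "greater" pieces have diameter at most `L`
  have hdg : ∀ u : ℝ, ∀ z ∈ Ag u, ∀ z' ∈ Ag u, z' - z ≤ L := by
    intro u z hz z' hz'
    rcases le_or_gt z' z with h | h
    · linarith
    · obtain ⟨hzP, hzQ⟩ := hz
      obtain ⟨hzP', _⟩ := hz'
      have e2 := est2 z (Pf z) (hPf z)
      have e1 := est1 z' (Qf z) (hQf z)
      rw [hzP] at e2
      rw [hzP'] at e1
      have hgap' : δ ≤ g (Qf z) - u := by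
        have hne : g (Pf z) ≠ g (Qf z) := by rw [hzP]; exact ne_of_lt hzQ
        have habs := gapPQ z hne
        rw [hzP, abs_sub_comm, abs_of_pos (by linarith)] at habs
        exact habs
      rw [hL, le_div_iff₀ hδ]
      nlinarith [mul_le_mul_of_nonneg_left hgap' (by linarith : (0:ℝ) ≤ z' - z)]
  -- the "lesser" pieces have diameter at most `L`
  have hdl : ∀ u : ℝ, ∀ z ∈ Al u, ∀ z' ∈ Al u, z' - z ≤ L := by
    intro u z hz z' hz'
    rcases le_or_gt z' z with h | h
    · linarith
    · obtain ⟨hzP, _⟩ := hz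
      obtain ⟨hzP', hzQ'⟩ := hz'
      have e2 := est2 z' (Pf z') (hPf z')
      have e1 := est1 z (Qf z') (hQf z')
      rw [hzP'] at e2
      rw [hzP] at e1
      have hgap' : δ ≤ u - g (Qf z') := by
        have hne : g (Pf z') ≠ g (Qf z') := by rw [hzP']; exact (ne_of_lt hzQ').symm
        have habs := gapPQ z' hne
        rw [hzP', abs_of_pos (by linarith)] at habs
        exact habs
      rw [hL, le_div_iff₀ hδ]
      nlinarith [mul_le_mul_of_nonneg_left hgap' (by linarith : (0:ℝ) ≤ z' - z)]
  have hcover : {z : ℝ | g (Pf z) ≠ g (Qf z)} ⊆ ⋃ u ∈ V, (Ag u ∪ Al u) := by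
    intro z hz
    have hzV : g (Pf z) ∈ V := hgV _ (hPf z)
    refine Set.mem_biUnion hzV ?_
    rcases lt_or_gt_of_ne hz with h | h
    · exact Or.inl ⟨rfl, h⟩
    · exact Or.inr ⟨rfl, h⟩
  calc D {z : ℝ | g (Pf z) ≠ g (Qf z)} ≤ D (⋃ u ∈ V, (Ag u ∪ Al u)) := measure_mono hcover
    _ ≤ ∑ u ∈ V, D (Ag u ∪ Al u) := measure_biUnion_finset_le V _
    _ ≤ ∑ _u ∈ V, (ENNReal.ofReal ρ + ENNReal.ofReal ρ) := by
        refine Finset.sum_le_sum fun u _ => ?_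
        refine (measure_union_le _ _).trans (add_le_add ?_ ?_)
        · exact measure_le_of_small_diam D ρ L hdisp (Ag u) (hdg u)
        · exact measure_le_of_small_diam D ρ L hdisp (Al u) (hdl u)
    _ = (V.card : ℝ≥0∞) * (ENNReal.ofReal ρ + ENNReal.ofReal ρ) := by
        rw [Finset.sum_const, nsmul_eq_mul]
    _ ≤ (κ : ℝ≥0∞) * (ENNReal.ofReal ρ + ENNReal.ofReal ρ) :=
        mul_le_mul_left (by exact_mod_cast Nat.cast_le.mpr hκ) _
    _ = ENNReal.ofReal (2 * κ * ρ) := by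
        rw [← ENNReal.ofReal_add hρ hρ, ← ENNReal.ofReal_natCast κ,
          ← ENNReal.ofReal_mul (Nat.cast_nonneg κ)]
        congr 1
        ring

/-- **Transductive contextual stability.**
In the transductive contextual setting with finite context set `P`, if `Γ` is
`(κ,δ)`-admissible, the coordinates `α_{σ,j}` are i.i.d. with a
`(ρ, (1+2ε)/δ)`-dispersed law `D`, and `πtraj α` is an ε-approximate contextual FTPL
trajectory (for the extension `Γ^P`) for every `α`, then
`E[ Σ_{t=1}^T ( f(π_{t+1}(α)(σ_t), y_t) − f(π_t(α)(σ_t), y_t) ) ] ≤ 2TNκρ`. -/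
theorem transductive_contextual_stability
    {X Y P : Type*} [Fintype X] [Nonempty X] [Fintype P]
    (f : X → Y → ℝ) (hf : ∀ x y, f x y ∈ Set.Icc (0:ℝ) 1)
    (T : ℕ) (hT : 1 ≤ T) (σ : ℕ → P) (y : ℕ → Y)
    (N : ℕ) (hN : 1 ≤ N)
    (Γ : X → Fin N → ℝ) (hΓ : ∀ x j, Γ x j ∈ Set.Icc (0:ℝ) 1)
    (Pol : Finset (P → X)) (hPol : Pol.Nonempty)
    (κ : ℕ) (δ : ℝ) (hδ : 0 < δ)
    -- (κ,δ)-admissibility of Γ: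
    (hrows : ∀ x x' : X, x ≠ x' → ∃ j, Γ x j ≠ Γ x' j)
    (hcol : ∀ j : Fin N, (Finset.univ.image fun x => Γ x j).card ≤ κ)
    (hgap : ∀ (j : Fin N) (x x' : X), Γ x j ≠ Γ x' j → δ ≤ |Γ x j - Γ x' j|)
    (ε ρ : ℝ) (hε : 0 ≤ ε)
    (D : Measure ℝ) [IsProbabilityMeasure D]
    (hdisp : ∀ a : ℝ, D (Set.Icc a (a + (1 + 2*ε)/δ)) ≤ ENNReal.ofReal ρ)
    (πtraj : (P × Fin N → ℝ) → ℕ → (P → X))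
    (hmem : ∀ (α : P × Fin N → ℝ) (t : ℕ), πtraj α t ∈ Pol)
    (hmeas : ∀ (t : ℕ) (π₀ : P → X), MeasurableSet {α : P × Fin N → ℝ | πtraj α t = π₀})
    (htraj : ∀ (α : P × Fin N → ℝ) (t : ℕ), 1 ≤ t → t ≤ T + 1 → ∀ π ∈ Pol,
      (∑ τ ∈ Finset.Icc 1 (t-1), f (πtraj α t (σ τ)) (y τ)) +
        (∑ c : P × Fin N, α c * Γ (πtraj α t c.1) c.2) ≥
      (∑ τ ∈ Finset.Icc 1 (t-1), f (π (σ τ)) (y τ)) +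
        (∑ c : P × Fin N, α c * Γ (π c.1) c.2) - ε) :
    ∫ α, (∑ t ∈ Finset.Icc 1 T,
          (f (πtraj α (t+1) (σ t)) (y t) - f (πtraj α t (σ t)) (y t)))
        ∂(Measure.pi fun _ : P × Fin N => D) ≤ 2 * T * N * κ * ρ := by
  classical
  have hLpos : (0:ℝ) < (1 + 2*ε)/δ := by positivity
  -- `ρ` is necessarily nonnegative
  have hρ : 0 ≤ ρ := by
    by_contra hneg
    push_neg at hneg
    have h0 : ∀ a : ℝ, D (Set.Icc a (a + (1 + 2*ε)/δ)) = 0 := fun a =>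
      le_antisymm (by simpa [ENNReal.ofReal_eq_zero.mpr hneg.le] using hdisp a) zero_le
    have hcover : (Set.univ : Set ℝ) ⊆
        ⋃ n : ℤ, Set.Icc ((n:ℝ) * ((1 + 2*ε)/δ)) ((n:ℝ) * ((1 + 2*ε)/δ) + (1 + 2*ε)/δ) := by
      intro x _
      refine Set.mem_iUnion.mpr ⟨⌊x / ((1 + 2*ε)/δ)⌋, ?_, ?_⟩
      · exact (le_div_iff₀ hLpos).mp (Int.floor_le _)
      · have h1 := (Int.lt_floor_add_one (x / ((1 + 2*ε)/δ))).le
        have h2 : x / ((1 + 2*ε)/δ) * ((1 + 2*ε)/δ)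
            ≤ ((⌊x / ((1 + 2*ε)/δ)⌋ : ℝ) + 1) * ((1 + 2*ε)/δ) :=
          mul_le_mul_of_nonneg_right h1 hLpos.le
        rw [div_mul_cancel₀ _ hLpos.ne'] at h2
        linarith
    have hcontra : (1 : ℝ≥0∞) ≤ 0 := by
      calc (1:ℝ≥0∞) = D Set.univ := (measure_univ).symm
        _ ≤ D (⋃ n : ℤ, Set.Icc ((n:ℝ) * ((1 + 2*ε)/δ))
              ((n:ℝ) * ((1 + 2*ε)/δ) + (1 + 2*ε)/δ)) := measure_mono hcover
        _ ≤ ∑' n : ℤ, D (Set.Icc ((n:ℝ) * ((1 + 2*ε)/δ))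
              ((n:ℝ) * ((1 + 2*ε)/δ) + (1 + 2*ε)/δ)) := measure_iUnion_le _
        _ = 0 := by simp [h0]
    simp at hcontra
  -- the "bad" events
  have hBadMeas : ∀ (t : ℕ) (j : Fin N),
      MeasurableSet {α : P × Fin N → ℝ |
        Γ (πtraj α t (σ t)) j ≠ Γ (πtraj α (t+1) (σ t)) j} := by
    intro t j
    have hrepr : {α : P × Fin N → ℝ | Γ (πtraj α t (σ t)) j ≠ Γ (πtraj α (t+1) (σ t)) j}
        = ⋃ (q : (P → X) × (P → X)) (_ : Γ (q.1 (σ t)) j ≠ Γ (q.2 (σ t)) j),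
            ({α : P × Fin N → ℝ | πtraj α t = q.1} ∩ {α | πtraj α (t+1) = q.2}) := by
      ext α
      simp only [Set.mem_setOf_eq, Set.mem_iUnion, Set.mem_inter_iff]
      constructor
      · intro h
        exact ⟨(πtraj α t, πtraj α (t+1)), h, rfl, rfl⟩
      · rintro ⟨q, hq, h1, h2⟩
        rw [h1, h2]
        exact hq
    rw [hrepr]
    exact MeasurableSet.iUnion fun q => MeasurableSet.iUnion fun _ =>
      (hmeas t q.1).inter (hmeas (t+1) q.2)
  -- the key per-round, per-column bound on the probability of a change
  have key : ∀ t : ℕ, 1 ≤ t → t ≤ T → ∀ j : Fin N,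
      (Measure.pi fun _ : P × Fin N => D)
        {α : P × Fin N → ℝ | Γ (πtraj α t (σ t)) j ≠ Γ (πtraj α (t+1) (σ t)) j}
        ≤ ENNReal.ofReal (2 * κ * ρ) := by
    intro t ht1 ht2 j
    obtain ⟨t', rfl⟩ : ∃ t', t = t' + 1 := ⟨t - 1, by omega⟩
    set c : P × Fin N := (σ (t'+1), j) with hc
    -- the one-dimensional slice bound
    have slice : ∀ β : P × Fin N → ℝ,
        D {z : ℝ | Γ (πtraj (Function.update β c z) (t'+1) (σ (t'+1))) j
            ≠ Γ (πtraj (Function.update β c z) (t'+1+1) (σ (t'+1))) j}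
          ≤ ENNReal.ofReal (2 * κ * ρ) := by
      intro β
      have decomp : ∀ (π : P → X) (z : ℝ),
          (∑ c' : P × Fin N, Function.update β c z c' * Γ (π c'.1) c'.2) =
            z * Γ (π (σ (t'+1))) j +
              ∑ c' ∈ Finset.univ.erase c, β c' * Γ (π c'.1) c'.2 := by
        intro π z
        rw [← Finset.add_sum_erase Finset.univ
          (fun c' => Function.update β c z c' * Γ (π c'.1) c'.2) (Finset.mem_univ c)]
        congr 1
        · rw [Function.update_self, hc]
        · refine Finset.sum_congr rfl fun c' hc' => ?_
          rw [Function.update_of_ne (Finset.ne_of_mem_erase hc')]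
      refine ftpl_slice_bound Pol
        (fun π => Γ (π (σ (t'+1))) j)
        (fun π => (∑ τ ∈ Finset.Icc 1 t', f (π (σ τ)) (y τ)) +
          ∑ c' ∈ Finset.univ.erase c, β c' * Γ (π c'.1) c'.2)
        (fun π => f (π (σ (t'+1))) (y (t'+1)))
        (Finset.univ.image fun x => Γ x j)
        (fun π _ => Finset.mem_image_of_mem _ (Finset.mem_univ _))
        (fun π _ => (hf _ _).1) (fun π _ => (hf _ _).2)
        κ (hcol j) δ hδ
        ?_ ε ρ hε hρ D hdisp
        (fun z => πtraj (Function.update β c z) (t'+1))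
        (fun z => πtraj (Function.update β c z) (t'+1+1))
        (fun z => hmem _ _) (fun z => hmem _ _)
        ?_ ?_
      · intro a ha b hb hab
        obtain ⟨x, _, rfl⟩ := Finset.mem_image.mp ha
        obtain ⟨x', _, rfl⟩ := Finset.mem_image.mp hb
        exact hgap j x x' hab
      · -- approximate optimality at time t'+1
        intro z π hπ
        have h := htraj (Function.update β c z) (t'+1) (by omega) (by omega) π hπ
        simp only [Nat.add_sub_cancel] at h
        rw [decomp (πtraj (Function.update β c z) (t'+1)) z, decomp π z] at h
        linarith
      · -- approximate optimality at time t'+2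
        intro z π hπ
        have h := htraj (Function.update β c z) (t'+1+1) (by omega) (by omega) π hπ
        simp only [Nat.add_sub_cancel] at h
        rw [Finset.sum_Icc_succ_top (by omega : 1 ≤ t'+1)
            (fun τ => f (πtraj (Function.update β c z) (t'+1+1) (σ τ)) (y τ)),
          Finset.sum_Icc_succ_top (by omega : 1 ≤ t'+1) (fun τ => f (π (σ τ)) (y τ))] at h
        rw [decomp (πtraj (Function.update β c z) (t'+1+1)) z, decomp π z] at h
        linarith
    -- pass from the slice bound to the product measure via marginals
    have hind : Measurable (({α : P × Fin N → ℝ |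
        Γ (πtraj α (t'+1) (σ (t'+1))) j ≠ Γ (πtraj α (t'+1+1) (σ (t'+1))) j}).indicator
          (1 : (P × Fin N → ℝ) → ℝ≥0∞)) :=
      measurable_one.indicator (hBadMeas (t'+1) j)
    rw [← lintegral_indicator_one (hBadMeas (t'+1) j)]
    rw [lintegral_eq_lmarginal_univ (fun _ : P × Fin N => (0:ℝ))]
    rw [lmarginal_erase' _ hind (Finset.mem_univ c)]
    have hslice' : ∀ x : P × Fin N → ℝ,
        (∫⁻ z, ({α : P × Fin N → ℝ |
            Γ (πtraj α (t'+1) (σ (t'+1))) j ≠ Γ (πtraj α (t'+1+1) (σ (t'+1))) j}).indicator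
              (1 : (P × Fin N → ℝ) → ℝ≥0∞) (Function.update x c z) ∂D)
          ≤ ENNReal.ofReal (2 * κ * ρ) := by
      intro x
      have hmeq : (fun z : ℝ => ({α : P × Fin N → ℝ |
            Γ (πtraj α (t'+1) (σ (t'+1))) j ≠ Γ (πtraj α (t'+1+1) (σ (t'+1))) j}).indicator
              (1 : (P × Fin N → ℝ) → ℝ≥0∞) (Function.update x c z))
          = fun z : ℝ => ({z : ℝ | Γ (πtraj (Function.update x c z) (t'+1) (σ (t'+1))) j
              ≠ Γ (πtraj (Function.update x c z) (t'+1+1) (σ (t'+1))) j}).indicator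
                (1 : ℝ → ℝ≥0∞) z := by
        funext z
        by_cases hz : Γ (πtraj (Function.update x c z) (t'+1) (σ (t'+1))) j
            ≠ Γ (πtraj (Function.update x c z) (t'+1+1) (σ (t'+1))) j <;>
          simp [Set.indicator_apply, hz]
      have hms : MeasurableSet {z : ℝ | Γ (πtraj (Function.update x c z) (t'+1) (σ (t'+1))) j
          ≠ Γ (πtraj (Function.update x c z) (t'+1+1) (σ (t'+1))) j} :=
        (measurable_update x) (hBadMeas (t'+1) j)
      rw [hmeq, lintegral_indicator_one hms]
      exact slice x
    refine le_trans (lmarginal_mono (fun x => hslice' x) _) (le_of_eq ?_)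
    simp [MeasureTheory.lmarginal]
  -- integrability of the pieces
  have hFrepr : ∀ (s t : ℕ), (fun α : P × Fin N → ℝ => f (πtraj α s (σ t)) (y t))
      = fun α => ∑ π₀ ∈ Pol,
          Set.indicator {α' : P × Fin N → ℝ | πtraj α' s = π₀}
            (fun _ => f (π₀ (σ t)) (y t)) α := by
    intro s t
    funext α
    rw [Finset.sum_eq_single_of_mem (πtraj α s) (hmem α s)]
    · simp [Set.indicator_apply]
    · intro π₀ _ hb
      have hne : ¬ (πtraj α s = π₀) := fun h => hb h.symm
      simp [Set.indicator_apply, hne]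
  have hFint : ∀ (s t : ℕ),
      Integrable (fun α : P × Fin N → ℝ => f (πtraj α s (σ t)) (y t))
        (Measure.pi fun _ : P × Fin N => D) := by
    intro s t
    rw [hFrepr s t]
    exact integrable_finset_sum _ fun π₀ _ => (integrable_const _).indicator (hmeas s π₀)
  have hχint : ∀ (t : ℕ) (j : Fin N),
      Integrable (({α : P × Fin N → ℝ |
          Γ (πtraj α t (σ t)) j ≠ Γ (πtraj α (t+1) (σ t)) j}).indicator
            (fun _ => (1:ℝ))) (Measure.pi fun _ : P × Fin N => D) :=
    fun t j => (integrable_const _).indicator (hBadMeas t j)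
  -- the pointwise bound
  have hpoint : ∀ (t : ℕ) (α : P × Fin N → ℝ),
      f (πtraj α (t+1) (σ t)) (y t) - f (πtraj α t (σ t)) (y t)
        ≤ ∑ j : Fin N, ({α : P × Fin N → ℝ |
            Γ (πtraj α t (σ t)) j ≠ Γ (πtraj α (t+1) (σ t)) j}).indicator
              (fun _ => (1:ℝ)) α := by
    intro t α
    by_cases he : πtraj α (t+1) (σ t) = πtraj α t (σ t)
    · rw [he, sub_self]
      exact Finset.sum_nonneg fun j _ =>
        Set.indicator_nonneg (fun _ _ => zero_le_one) α
    · obtain ⟨j₀, hj₀⟩ := hrows _ _ he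
      have hmemb : α ∈ {α : P × Fin N → ℝ |
          Γ (πtraj α t (σ t)) j₀ ≠ Γ (πtraj α (t+1) (σ t)) j₀} := Ne.symm hj₀
      have h1 : ({α : P × Fin N → ℝ |
          Γ (πtraj α t (σ t)) j₀ ≠ Γ (πtraj α (t+1) (σ t)) j₀}).indicator
            (fun _ => (1:ℝ)) α = 1 := Set.indicator_of_mem hmemb _
      have h2 : f (πtraj α (t+1) (σ t)) (y t) ≤ 1 := (hf _ _).2
      have h3 : 0 ≤ f (πtraj α t (σ t)) (y t) := (hf _ _).1
      have h4 := Finset.single_le_sum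
        (f := fun j : Fin N => ({α' : P × Fin N → ℝ |
          Γ (πtraj α' t (σ t)) j ≠ Γ (πtraj α' (t+1) (σ t)) j}).indicator
            (fun _ => (1:ℝ)) α)
        (fun j _ => Set.indicator_nonneg (fun _ _ => zero_le_one) α)
        (Finset.mem_univ j₀)
      have h5 : (1:ℝ) ≤ ∑ j : Fin N, ({α' : P × Fin N → ℝ |
          Γ (πtraj α' t (σ t)) j ≠ Γ (πtraj α' (t+1) (σ t)) j}).indicator
            (fun _ => (1:ℝ)) α := by
        simpa [h1] using h4
      linarith
  -- put everything together
  calc ∫ α, (∑ t ∈ Finset.Icc 1 T,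
          (f (πtraj α (t+1) (σ t)) (y t) - f (πtraj α t (σ t)) (y t)))
        ∂(Measure.pi fun _ : P × Fin N => D)
      = ∑ t ∈ Finset.Icc 1 T, ∫ α,
          (f (πtraj α (t+1) (σ t)) (y t) - f (πtraj α t (σ t)) (y t))
            ∂(Measure.pi fun _ : P × Fin N => D) :=
        integral_finset_sum _ (fun t _ => (hFint (t+1) t).sub (hFint t t))
    _ ≤ ∑ t ∈ Finset.Icc 1 T, ∑ j : Fin N,
          ((Measure.pi fun _ : P × Fin N => D)
            {α : P × Fin N → ℝ |
              Γ (πtraj α t (σ t)) j ≠ Γ (πtraj α (t+1) (σ t)) j}).toReal := by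
        refine Finset.sum_le_sum fun t _ => ?_
        have hstep : ∫ α,
            (f (πtraj α (t+1) (σ t)) (y t) - f (πtraj α t (σ t)) (y t))
              ∂(Measure.pi fun _ : P × Fin N => D)
            ≤ ∫ α, (∑ j : Fin N, ({α : P × Fin N → ℝ |
                Γ (πtraj α t (σ t)) j ≠ Γ (πtraj α (t+1) (σ t)) j}).indicator
                  (fun _ => (1:ℝ)) α) ∂(Measure.pi fun _ : P × Fin N => D) :=
          integral_mono ((hFint (t+1) t).sub (hFint t t))
            (integrable_finset_sum _ fun j _ => hχint t j) (hpoint t)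
        refine hstep.trans (le_of_eq ?_)
        rw [integral_finset_sum _ (fun j _ => hχint t j)]
        refine Finset.sum_congr rfl fun j _ => ?_
        rw [integral_indicator_const (1:ℝ) (hBadMeas t j)]
        simp
        rfl
    _ ≤ ∑ t ∈ Finset.Icc 1 T, ∑ _j : Fin N, (2 * (κ:ℝ) * ρ) := by
        refine Finset.sum_le_sum fun t ht => ?_
        refine Finset.sum_le_sum fun j _ => ?_
        have hm := key t (Finset.mem_Icc.mp ht).1 (Finset.mem_Icc.mp ht).2 j
        exact ENNReal.toReal_le_of_le_ofReal
          (mul_nonneg (by positivity) hρ) hm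
    _ = 2 * T * N * κ * ρ := by
        simp only [Finset.sum_const, Finset.card_univ, Fintype.card_fin, Nat.card_Icc,
          nsmul_eq_mul]
        push_cast
        ring
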